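/- arXiv:1803.10843 — 4 statements merged into one kernel-verified Lean document; each statement's English description precedes it below -/
import Mathlib

section
/- If a set A ⊆ ℕ computes a diagonally noncomputable function, then A computes a fixed point free function (a function f with W_{f(n)} ≠ W_n for all n). -/
open Part

/-- The `n`-th partial computable function in a standard numbering. -/
def phi (n : ℕ) : ℕ →. ℕ := (Denumerable.ofNat Nat.Partrec.Code n).eval

/-- `W n` is the domain of the `n`-th partial computable function. -/
def Wdom (n : ℕ) : Set ℕ := {x | (phi n x).Dom}

/-- Partial functions computable relative to a partial oracle `O`. -/
inductive RecursiveIn' (O : ℕ →. ℕ) : (ℕ →. ℕ) → Prop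
  | oracle : RecursiveIn' O O
  | zero : RecursiveIn' O (pure 0)
  | succ : RecursiveIn' O Nat.succ
  | left : RecursiveIn' O ↑fun n : ℕ => n.unpair.1
  | right : RecursiveIn' O ↑fun n : ℕ => n.unpair.2
  | pair {f g} : RecursiveIn' O f → RecursiveIn' O g →
      RecursiveIn' O fun n => Nat.pair <$> f n <*> g n
  | comp {f g} : RecursiveIn' O f → RecursiveIn' O g →
      RecursiveIn' O fun n => g n >>= f
  | prec {f g} : RecursiveIn' O f → RecursiveIn' O g →
      RecursiveIn' O (Nat.unpaired fun a n =>
        n.rec (f a) fun y IH => do let i ← IH; g (Nat.pair a (Nat.pair y i)))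
  | rfind {f} : RecursiveIn' O f →
      RecursiveIn' O fun a => Nat.rfind fun n => (fun m => m = 0) <$> f (Nat.pair a n)

open Classical in
/-- The characteristic function of a set `A` as a partial oracle. -/
noncomputable def chi (A : Set ℕ) : ℕ →. ℕ := fun n => Part.some (if n ∈ A then 1 else 0)

/-- A total function is computable relative to the set `A`. -/
def ComputableInSet (A : Set ℕ) (f : ℕ → ℕ) : Prop := RecursiveIn' (chi A) ↑f

/-- A partial function is computable relative to the set `A`. -/
def PartComputableInSet (A : Set ℕ) (f : ℕ →. ℕ) : Prop := RecursiveIn' (chi A) f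

/-- Turing reducibility between sets of naturals. -/
def TuringLe (A B : Set ℕ) : Prop := RecursiveIn' (chi B) (chi A)

/-- The halting set ∅′. -/
def K0 : Set ℕ := {n | (phi n n).Dom}

/-- `A` is computably enumerable. -/
def CE (A : Set ℕ) : Prop := REPred (· ∈ A)


open Nat.Partrec (Code)
open Nat.Partrec.Code

theorem natPartrec_recursiveIn {O : ℕ →. ℕ} {p : ℕ →. ℕ} (hp : Nat.Partrec p) :
    RecursiveIn' O p := by
  induction hp with
  | zero => exact .zero
  | succ => exact .succ
  | left => exact .left
  | right => exact .right
  | pair _ _ ih₁ ih₂ => exact .pair ih₁ ih₂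
  | comp _ _ ih₁ ih₂ => exact .comp ih₁ ih₂
  | prec _ _ ih₁ ih₂ => exact .prec ih₁ ih₂
  | rfind _ ih => exact .rfind ih

theorem computable_recursiveIn {O : ℕ →. ℕ} {f : ℕ → ℕ} (hf : Computable f) :
    RecursiveIn' O ↑f :=
  natPartrec_recursiveIn (Partrec.nat_iff.mp hf.partrec)

theorem recursiveIn_comp_total {O : ℕ →. ℕ} {g F t : ℕ → ℕ}
    (hg : RecursiveIn' O ↑g) (hF : Computable F) (ht : Computable t) :
    RecursiveIn' O ↑(fun n => F (Nat.pair n (g (t n)))) := by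
  have h1 : RecursiveIn' O fun n => (↑t : ℕ →. ℕ) n >>= (↑g : ℕ →. ℕ) :=
    RecursiveIn'.comp hg (computable_recursiveIn ht)
  have hid : RecursiveIn' O ↑(fun n : ℕ => n) :=
    computable_recursiveIn Computable.id
  have h2 := RecursiveIn'.pair hid h1
  have h3 := RecursiveIn'.comp (computable_recursiveIn hF) h2
  have he : (fun n => (Nat.pair <$> (↑(fun n : ℕ => n) : ℕ →. ℕ) n <*>
        ((↑t : ℕ →. ℕ) n >>= (↑g : ℕ →. ℕ))) >>= (↑F : ℕ →. ℕ)) = ((↑(fun n => F (Nat.pair n (g (t n)))) : ℕ →. ℕ)) := by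
    funext n
    change (Nat.pair <$> Part.some n <*> (Part.some (t n) >>= fun x => Part.some (g x))) >>= (fun x => Part.some (F x)) = Part.some (F (Nat.pair n (g (t n))))
    simp [PFun.coe_val, Seq.seq]
  rwa [he] at h3

section Construction
open Denumerable

/-- Boolean search predicate for ψ : looks for a pair `p = (k, x)` with `x ≠ 0`
and `x` in the domain of `φ_n` (witnessed at stage `k`). -/
def psiP (n p : ℕ) : Bool :=
  !(decide (p.unpair.2 = 0)) &&
    (evaln p.unpair.1 (Denumerable.ofNat Code n) p.unpair.2).isSome

/-- `psi n` searches for a nonzero element of `W n` and returns its predecessor. -/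
def psi (n : ℕ) : Part ℕ :=
  (Nat.rfind fun p => Part.some (psiP n p)).map fun p => p.unpair.2 - 1

theorem psiP_primrec : Primrec₂ psiP := by
  have hx : Primrec fun q : ℕ × ℕ => q.2.unpair.2 :=
    Primrec.snd.comp (Primrec.unpair.comp Primrec.snd)
  have hk : Primrec fun q : ℕ × ℕ => q.2.unpair.1 :=
    Primrec.fst.comp (Primrec.unpair.comp Primrec.snd)
  have hc : Primrec fun q : ℕ × ℕ => Denumerable.ofNat Code q.1 :=
    (Primrec.ofNat Code).comp Primrec.fst
  have hev : Primrec fun q : ℕ × ℕ =>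
      (evaln q.2.unpair.1 (Denumerable.ofNat Code q.1) q.2.unpair.2).isSome :=
    Primrec.option_isSome.comp (primrec_evaln.comp ((hk.pair hc).pair hx))
  have hne : Primrec fun q : ℕ × ℕ => !(decide (q.2.unpair.2 = 0)) :=
    Primrec.not.comp (Primrec.eq.comp hx (Primrec.const 0)).decide
  exact Primrec.and.comp hne hev

theorem psi_partrec : Partrec psi := by
  have h1 : Partrec fun n : ℕ => Nat.rfind fun p => Part.some (psiP n p) :=
    Partrec.rfind (psiP_primrec.to_comp.partrec₂)
  exact h1.map ((Primrec.pred.comp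
    (Primrec.snd.comp (Primrec.unpair.comp Primrec.snd))).to_comp.to₂)

/-- Boolean search predicate for the machine family `Q`.
Input `m = pair (pair n v) x`; halts iff `x = 0`, or `x = v+1` and `0 ∈ W n`. -/
def qP (m s : ℕ) : Bool :=
  decide (m.unpair.2 = 0) ||
    (decide (m.unpair.2 = m.unpair.1.unpair.2 + 1) &&
      (evaln s (Denumerable.ofNat Code m.unpair.1.unpair.1) 0).isSome)

def Qfun (m : ℕ) : Part ℕ := Nat.rfind fun s => Part.some (qP m s)

theorem qP_primrec : Primrec₂ qP := by
  have hx : Primrec fun q : ℕ × ℕ => q.1.unpair.2 :=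
    Primrec.snd.comp (Primrec.unpair.comp Primrec.fst)
  have hv : Primrec fun q : ℕ × ℕ => q.1.unpair.1.unpair.2 :=
    Primrec.snd.comp (Primrec.unpair.comp (Primrec.fst.comp (Primrec.unpair.comp Primrec.fst)))
  have hn : Primrec fun q : ℕ × ℕ => q.1.unpair.1.unpair.1 :=
    Primrec.fst.comp (Primrec.unpair.comp (Primrec.fst.comp (Primrec.unpair.comp Primrec.fst)))
  have h1 : Primrec fun q : ℕ × ℕ => decide (q.1.unpair.2 = 0) :=
    (Primrec.eq.comp hx (Primrec.const 0)).decide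
  have h2 : Primrec fun q : ℕ × ℕ => decide (q.1.unpair.2 = q.1.unpair.1.unpair.2 + 1) :=
    (Primrec.eq.comp hx (Primrec.succ.comp hv)).decide
  have h3 : Primrec fun q : ℕ × ℕ =>
      (evaln q.2 (Denumerable.ofNat Code q.1.unpair.1.unpair.1) 0).isSome :=
    Primrec.option_isSome.comp
      (primrec_evaln.comp ((Primrec.snd.pair ((Primrec.ofNat Code).comp hn)).pair (Primrec.const 0)))
  exact Primrec.or.comp h1 (Primrec.and.comp h2 h3)

theorem Qfun_partrec : Partrec Qfun :=
  Partrec.rfind (qP_primrec.to_comp.partrec₂)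

end Construction

theorem dom_iff_evaln {c : Code} {x : ℕ} :
    (eval c x).Dom ↔ ∃ k, (evaln k c x).isSome := by
  rw [Part.dom_iff_mem]
  constructor
  · rintro ⟨y, hy⟩
    obtain ⟨k, hk⟩ := evaln_complete.mp hy
    exact ⟨k, Option.isSome_iff_exists.mpr ⟨y, hk⟩⟩
  · rintro ⟨k, hk⟩
    obtain ⟨y, hy⟩ := Option.isSome_iff_exists.mp hk
    exact ⟨y, evaln_complete.mpr ⟨k, hy⟩⟩


theorem dnc_computes_fpf_aux (A : Set ℕ)
    (h : ∃ g : ℕ → ℕ, ComputableInSet A g ∧ ∀ e, phi e e ≠ Part.some (g e)) :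
    ∃ f : ℕ → ℕ, ComputableInSet A f ∧ ∀ n, Wdom (f n) ≠ Wdom n := by
  obtain ⟨g, hgA, hdnc⟩ := h
  -- a code for the ψ machine (uniformly in the parameter)
  obtain ⟨cT, hcT⟩ := exists_code.mp
    (Partrec.nat_iff.mp (psi_partrec.comp
      (Computable.fst.comp Computable.unpair) : Partrec fun m : ℕ => psi m.unpair.1))
  -- a code for the Q machine
  obtain ⟨cQ, hcQ⟩ := exists_code.mp (Partrec.nat_iff.mp Qfun_partrec)
  set t : ℕ → ℕ := fun n => Encodable.encode (curry cT n) with ht_def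
  have ht : Computable t :=
    (Primrec.encode.comp (primrec₂_curry.comp (Primrec.const cT) Primrec.id)).to_comp
  set F : ℕ → ℕ := fun m => Encodable.encode (curry cQ m) with hF_def
  have hF : Computable F :=
    (Primrec.encode.comp (primrec₂_curry.comp (Primrec.const cQ) Primrec.id)).to_comp
  refine ⟨fun n => F (Nat.pair n (g (t n))), recursiveIn_comp_total hgA hF ht, ?_⟩
  intro n hEq
  set v : ℕ := g (t n) with hv_def
  -- semantics of phi (t n)
  have hphit : phi (t n) (t n) = psi n := by
    simp only [phi, ht_def, Denumerable.ofNat_encode, eval_curry, hcT, Nat.unpair_pair]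
  -- semantics of the f-machine
  have hWf : ∀ x, x ∈ Wdom (F (Nat.pair n v)) ↔
      (x = 0 ∨ (x = v + 1 ∧ (phi n 0).Dom)) := by
    intro x
    have : phi (F (Nat.pair n v)) x = Qfun (Nat.pair (Nat.pair n v) x) := by
      simp only [phi, hF_def, Denumerable.ofNat_encode, eval_curry, hcQ]
    show (phi (F (Nat.pair n v)) x).Dom ↔ _
    rw [this]
    have : (Qfun (Nat.pair (Nat.pair n v) x)).Dom ↔
        ∃ s, qP (Nat.pair (Nat.pair n v) x) s = true := by
      exact (Nat.rfind_dom (p := fun s => Part.some (qP (Nat.pair (Nat.pair n v) x) s))).trans (by simp)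
    rw [this]
    simp only [qP, Nat.unpair_pair]
    rw [show ((phi n 0).Dom ↔ ∃ k, (evaln k (Denumerable.ofNat Code n) 0).isSome) from
      dom_iff_evaln]
    constructor
    · rintro ⟨s, hs⟩
      simp only [Bool.or_eq_true, Bool.and_eq_true, decide_eq_true_eq,
        Option.isSome_iff_exists] at hs
      rcases hs with h1 | ⟨h1, y, h2⟩
      · exact Or.inl h1
      · exact Or.inr ⟨h1, s, Option.isSome_iff_exists.mpr ⟨y, h2⟩⟩
    · rintro (h1 | ⟨h1, s, h2⟩)
      · exact ⟨0, by simp [h1]⟩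
      · exact ⟨s, by simp [h1, h2]⟩
  -- derive the facts
  have h0 : (phi n 0).Dom := by
    have : (0 : ℕ) ∈ Wdom (F (Nat.pair n v)) := (hWf 0).mpr (Or.inl rfl)
    rw [hEq] at this
    exact this
  have hv1 : (phi n (v + 1)).Dom := by
    have : v + 1 ∈ Wdom (F (Nat.pair n v)) := (hWf (v + 1)).mpr (Or.inr ⟨rfl, h0⟩)
    rw [hEq] at this
    exact this
  have honly : ∀ x, (phi n x).Dom → x ≠ 0 → x = v + 1 := by
    intro x hx hne
    have : x ∈ Wdom n := hx
    rw [← hEq] at this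
    rcases (hWf x).mp this with h1 | ⟨h1, _⟩
    · exact absurd h1 hne
    · exact h1
  -- now show psi n = some v, contradicting DNC at t n
  have hmem : v ∈ psi n := by
    have hdom : (Nat.rfind fun p => Part.some (psiP n p)).Dom := by
      refine Nat.rfind_dom.mpr ?_
      obtain ⟨k, hk⟩ := dom_iff_evaln.mp (show (eval (Denumerable.ofNat Code n) (v+1)).Dom from hv1)
      refine ⟨Nat.pair k (v + 1), ?_, fun {m} _ => trivial⟩
      simp [psiP, Nat.unpair_pair, hk]
    set p₀ := (Nat.rfind fun p => Part.some (psiP n p)).get hdom with hp₀_def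
    have hp₀ : p₀ ∈ Nat.rfind fun p => Part.some (psiP n p) := Part.get_mem hdom
    have hspec : psiP n p₀ = true := by
      have := Nat.rfind_spec hp₀
      simpa using this
    simp only [psiP, Bool.and_eq_true, Bool.not_eq_true', decide_eq_false_iff_not,
      Option.isSome_iff_exists] at hspec
    obtain ⟨hne, y, hy⟩ := hspec
    have hxdom : (phi n p₀.unpair.2).Dom :=
      Part.dom_iff_mem.mpr ⟨y, evaln_sound hy⟩
    have hx : p₀.unpair.2 = v + 1 := honly _ hxdom hne
    have : p₀.unpair.2 - 1 ∈ psi n := Part.mem_map _ hp₀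
    rwa [hx, Nat.add_sub_cancel] at this
  exact hdnc (t n) (by rw [hphit]; exact (Part.eq_some_iff.mpr hmem))

theorem dnc_computes_fpf (A : Set ℕ)
    (h : ∃ g : ℕ → ℕ, ComputableInSet A g ∧ ∀ e, phi e e ≠ Part.some (g e)) :
    ∃ f : ℕ → ℕ, ComputableInSet A f ∧ ∀ n, Wdom (f n) ≠ Wdom n := dnc_computes_fpf_aux A h
end

section
/- If a set A ⊆ ℕ computes a fixed point free function, then A computes a diagonally noncomputable function. -/
open Part

lemma partrec_recursiveIn {O : ℕ →. ℕ} {f : ℕ →. ℕ} (hf : Nat.Partrec f) :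
    RecursiveIn' O f := by
  induction hf with
  | zero => exact RecursiveIn'.zero
  | succ => exact RecursiveIn'.succ
  | left => exact RecursiveIn'.left
  | right => exact RecursiveIn'.right
  | pair _ _ ih1 ih2 => exact RecursiveIn'.pair ih1 ih2
  | comp _ _ ih1 ih2 => exact RecursiveIn'.comp ih1 ih2
  | prec _ _ ih1 ih2 => exact RecursiveIn'.prec ih1 ih2
  | rfind _ ih => exact RecursiveIn'.rfind ih

theorem fpf_computes_dnc (A : Set ℕ)
    (h : ∃ f : ℕ → ℕ, ComputableInSet A f ∧ ∀ n, Wdom (f n) ≠ Wdom n) :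
    ∃ g : ℕ → ℕ, ComputableInSet A g ∧ ∀ e, phi e e ≠ Part.some (g e) := by
  obtain ⟨f, hf, hfpf⟩ := h
  have hF : Nat.Partrec fun n : ℕ =>
      (phi n.unpair.1 n.unpair.1).bind fun k => phi k n.unpair.2 := by
    refine Partrec.nat_iff.1 ?_
    have hphi : Partrec fun p : ℕ × ℕ => phi p.1 p.2 :=
      Nat.Partrec.Code.eval_part.comp ((Computable.ofNat _).comp Computable.fst)
        Computable.snd
    exact Partrec.bind
      (hphi.comp (Computable.pair (Computable.fst.comp Computable.unpair)
        (Computable.fst.comp Computable.unpair)))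
      ((hphi.comp (Computable.pair Computable.snd
        ((Computable.snd.comp Computable.unpair).comp Computable.fst))).to₂)
  obtain ⟨c, hc⟩ := Nat.Partrec.Code.exists_code.1 hF
  set H : ℕ → ℕ := fun e => Encodable.encode (c.curry e) with hH
  have hHcomp : Computable H :=
    (Primrec.encode.comp
      (Nat.Partrec.Code.primrec₂_curry.comp (Primrec.const c) Primrec.id)).to_comp
  have keyH : ∀ e x, phi (H e) x = (phi e e).bind fun k => phi k x := by
    intro e x
    have : phi (H e) x = c.eval (Nat.pair e x) := by
      simp [phi, hH, Nat.Partrec.Code.eval_curry]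
    rw [this, hc]; simp
  refine ⟨f ∘ H, ?_, ?_⟩
  · have hHrec : RecursiveIn' (chi A) ↑H := partrec_recursiveIn (Partrec.nat_iff.1 hHcomp)
    have := RecursiveIn'.comp hf hHrec
    have heq : (fun n => (H : ℕ →. ℕ) n >>= (f : ℕ →. ℕ)) = ((f ∘ H : ℕ → ℕ) : ℕ →. ℕ) := by
      funext n
      simp [PFun.coe_val]
      exact Part.bind_some (H n) (f : ℕ →. ℕ)
    rwa [heq] at this
  · intro e he
    apply hfpf (H e)
    have : phi (H e) = phi (f (H e)) := by
      funext x
      rw [keyH e x, he]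
      simp
    simp [Wdom, this]
end

section
/- Visser's ADN theorem: Let δ be a partial computable function that is fixed point free, i.e., whenever δ(n) is defined, W_{δ(n)} ≠ W_n. Then for every partial computable function ψ there exists a total computable function f such that for all n: if ψ(n)↓ then W_{f(n)} = W_{ψ(n)}, and if ψ(n)↑ then δ(f(n))↑. -/
open Part

open Nat.Partrec Nat.Partrec.Code in
theorem ADN_theorem (δ : ℕ →. ℕ) (hδ : Partrec δ)
    (hfpf : ∀ n, ∀ a ∈ δ n, Wdom a ≠ Wdom n)
    (ψ : ℕ →. ℕ) (hψ : Partrec ψ) :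
    ∃ f : ℕ → ℕ, Computable f ∧
      (∀ n, ∀ a ∈ ψ n, Wdom (f n) = Wdom a) ∧
      (∀ n, ¬(ψ n).Dom → ¬(δ (f n)).Dom) := by
  obtain ⟨cψ, hcψ⟩ := exists_code.1 (Partrec.nat_iff.1 hψ)
  obtain ⟨cδ, hcδ⟩ := exists_code.1 (Partrec.nat_iff.1 hδ)
  -- the stage-k approximation: try ψ first, then δ at index e
  set h : ℕ → ℕ → ℕ → Option ℕ := fun e n k =>
    (evaln k cψ n).orElse (fun _ => evaln k cδ e) with hh
  set F : Code → ℕ →. ℕ := fun c p =>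
    (Nat.rfindOpt (h (Encodable.encode (c.curry p.unpair.1)) p.unpair.1)).bind
      (fun a => (Denumerable.ofNat Code a).eval p.unpair.2) with hF
  have hFp : Partrec₂ F := by
    have hhc : Computable₂ fun (q : Code × ℕ) (k : ℕ) =>
        h (Encodable.encode (Code.curry q.1 q.2.unpair.1)) q.2.unpair.1 k := by
      have e1 : Primrec fun q : (Code × ℕ) × ℕ => evaln q.2 cψ q.1.2.unpair.1 :=
        primrec_evaln.comp ((Primrec.snd.pair (Primrec.const cψ)).pair
          (Primrec.fst.comp (Primrec.unpair.comp (Primrec.snd.comp Primrec.fst))))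
      have e2 : Primrec fun q : (Code × ℕ) × ℕ =>
          evaln q.2 cδ (Encodable.encode (Code.curry q.1.1 q.1.2.unpair.1)) :=
        primrec_evaln.comp ((Primrec.snd.pair (Primrec.const cδ)).pair
          (Primrec.encode.comp (primrec₂_curry.comp (Primrec.fst.comp Primrec.fst)
            (Primrec.fst.comp (Primrec.unpair.comp (Primrec.snd.comp Primrec.fst))))))
      exact (Primrec.option_orElse.comp e1 e2).to_comp.to₂
    have hrf : Partrec fun q : Code × ℕ =>
        Nat.rfindOpt (h (Encodable.encode (Code.curry q.1 q.2.unpair.1)) q.2.unpair.1) :=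
      Partrec.rfindOpt hhc
    exact hrf.bind ((eval_part.comp
      ((Computable.ofNat Code).comp Computable.snd)
      ((Primrec.snd.comp (Primrec.unpair.comp
        (Primrec.snd.comp Primrec.fst))).to_comp)).to₂)
  obtain ⟨c, hc⟩ := fixed_point₂ hFp
  refine ⟨fun n => Encodable.encode (c.curry n), ?_, ?_, ?_⟩
  · exact (Primrec.encode.comp (primrec₂_curry.comp (Primrec.const c) Primrec.id)).to_comp
  all_goals
    have key : ∀ n x, phi (Encodable.encode (c.curry n)) x =
        (Nat.rfindOpt (h (Encodable.encode (c.curry n)) n)).bind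
          (fun a => phi a x) := by
      intro n x
      have h0 : phi (Encodable.encode (c.curry n)) x = (c.curry n).eval x := by
        simp [phi, Denumerable.ofNat_encode]
      rw [h0, eval_curry, hc]
      simp [hF, phi]
  -- common claim: the value found by rfindOpt is in ψ n, and
  -- the domains agree; δ-branch contradicts fpf
  all_goals
    have claim : ∀ n a, a ∈ Nat.rfindOpt (h (Encodable.encode (c.curry n)) n) →
        (a ∈ ψ n ∧ Wdom (Encodable.encode (c.curry n)) = Wdom a) := by
      intro n a ha
      have hsome : Nat.rfindOpt (h (Encodable.encode (c.curry n)) n) = Part.some a :=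
        Part.eq_some_iff.2 ha
      have hW : Wdom (Encodable.encode (c.curry n)) = Wdom a := by
        ext x
        have := key n x
        rw [hsome] at this
        simp only [Part.bind_some] at this
        simp [Wdom, this]
      obtain ⟨k, hk⟩ := Nat.rfindOpt_spec ha
      rcases h1 : evaln k cψ n with _ | b
      · simp only [hh, h1, Option.orElse_none, Option.mem_def] at hk
        have : a ∈ δ (Encodable.encode (c.curry n)) := by
          rw [← hcδ]; exact evaln_sound hk
        exact absurd hW.symm (hfpf _ a this)
      · simp only [hh, h1] at hk
        cases (show Option.some b = Option.some a from hk)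
        have : a ∈ ψ n := by
          rw [← hcψ]; exact evaln_sound (show a ∈ evaln k cψ n from h1)
        exact ⟨this, hW⟩
  · -- case ψ n ↓
    intro n a ha
    have hdom : (Nat.rfindOpt (h (Encodable.encode (c.curry n)) n)).Dom := by
      rw [Nat.rfindOpt_dom]
      have : a ∈ cψ.eval n := by rw [hcψ]; exact ha
      obtain ⟨k, hk⟩ := evaln_complete.1 this
      rw [Option.mem_def] at hk
      exact ⟨k, a, by simp [hh, hk]⟩
    obtain ⟨b, hb⟩ := Part.dom_iff_mem.1 hdom
    obtain ⟨hb1, hb2⟩ := claim n b hb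
    rwa [Part.mem_unique hb1 ha] at hb2
  · -- case ψ n ↑
    intro n hn hd
    obtain ⟨b, hb⟩ := Part.dom_iff_mem.1 hd
    have : b ∈ cδ.eval (Encodable.encode (c.curry n)) := by rw [hcδ]; exact hb
    obtain ⟨k, hk⟩ := evaln_complete.1 this
    rw [Option.mem_def] at hk
    have hdom : (Nat.rfindOpt (h (Encodable.encode (c.curry n)) n)).Dom := by
      rw [Nat.rfindOpt_dom]
      rcases h1 : evaln k cψ n with _ | a
      · exact ⟨k, b, by simp [hh, h1, hk]⟩
      · exact ⟨k, a, by simp [hh, h1]⟩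
    obtain ⟨a, ha⟩ := Part.dom_iff_mem.1 hdom
    exact hn (Part.dom_iff_mem.2 ⟨a, (claim n a ha).1⟩)
end

section
/- Uniform ADN theorem: Let δ be a partial computable fixed point free function. Then there exists a total computable function f such that for every e and n: if φ_e(n)↓ then W_{f(⟨e,n⟩)} = W_{φ_e(n)}, and if φ_e(n)↑ then δ(f(⟨e,n⟩))↑. -/
open Part

namespace ADNaux

open Nat.Partrec Nat.Partrec.Code

/-- The option-valued "search" step of the master functional. -/
def step (cδ : Code) (z s : ℕ) : Option ℕ :=
  evaln s (Denumerable.ofNat Code z.unpair.1.unpair.1) z.unpair.1.unpair.2 <|>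
    evaln s cδ
      (Encodable.encode ((Denumerable.ofNat Code z.unpair.2.unpair.1).curry z.unpair.2.unpair.1))

/-- The master functional for the ADN construction. -/
def master (cδ : Code) : ℕ →. ℕ := fun z =>
  (Nat.rfindOpt (step cδ z)) >>= fun v => (Denumerable.ofNat Code v).eval z.unpair.2.unpair.2

theorem none_orElse {α : Type*} (b : Option α) : (Option.none <|> b) = b := rfl

theorem some_orElse {α : Type*} (a : α) (b : Option α) : (Option.some a <|> b) = Option.some a := rfl

theorem step_primrec (cδ : Code) : Primrec₂ (step cδ) := by
  have u : Primrec (Nat.unpair) := Primrec.unpair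
  have h11 : Primrec fun z : ℕ => z.unpair.1.unpair.1 :=
    Primrec.fst.comp (u.comp (Primrec.fst.comp u))
  have h12 : Primrec fun z : ℕ => z.unpair.1.unpair.2 :=
    Primrec.snd.comp (u.comp (Primrec.fst.comp u))
  have h21 : Primrec fun z : ℕ => z.unpair.2.unpair.1 :=
    Primrec.fst.comp (u.comp (Primrec.snd.comp u))
  have hself : Primrec fun z : ℕ =>
      Encodable.encode ((Denumerable.ofNat Code z.unpair.2.unpair.1).curry z.unpair.2.unpair.1) :=
    Primrec.encode.comp (primrec₂_curry.comp ((Primrec.ofNat Code).comp h21) h21)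
  have hev : Primrec fun p : ℕ × ℕ =>
      evaln p.2 (Denumerable.ofNat Code p.1.unpair.1.unpair.1) p.1.unpair.1.unpair.2 :=
    primrec_evaln.comp ((Primrec.snd.pair
      (((Primrec.ofNat Code).comp h11).comp Primrec.fst)).pair (h12.comp Primrec.fst))
  have hev2 : Primrec fun p : ℕ × ℕ =>
      evaln p.2 cδ (Encodable.encode
        ((Denumerable.ofNat Code p.1.unpair.2.unpair.1).curry p.1.unpair.2.unpair.1)) :=
    primrec_evaln.comp ((Primrec.snd.pair (Primrec.const cδ)).pair (hself.comp Primrec.fst))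
  exact (Primrec.option_orElse.comp hev hev2).to₂

theorem master_partrec (cδ : Code) : Partrec (master cδ) := by
  have h1 : Partrec fun z : ℕ => Nat.rfindOpt (step cδ z) :=
    Partrec.rfindOpt (step_primrec cδ).to_comp
  have h2 : Partrec₂ fun (z v : ℕ) => (Denumerable.ofNat Code v).eval z.unpair.2.unpair.2 :=
    (eval_part.comp ((Computable.ofNat Code).comp Computable.snd)
      ((Primrec.snd.comp (Primrec.unpair.comp
        (Primrec.snd.comp Primrec.unpair))).to_comp.comp Computable.fst)).to₂
  exact h1.bind h2

end ADNaux

open Nat.Partrec Nat.Partrec.Code ADNaux in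
theorem ADN_uniform (δ : ℕ →. ℕ) (hδ : Partrec δ)
    (hfpf : ∀ n, ∀ a ∈ δ n, Wdom a ≠ Wdom n) :
    ∃ f : ℕ → ℕ, Computable f ∧
      (∀ e n, ∀ a ∈ phi e n, Wdom (f (Nat.pair e n)) = Wdom a) ∧
      (∀ e n, ¬(phi e n).Dom → ¬(δ (f (Nat.pair e n))).Dom) := by
  classical
  obtain ⟨cδ, hcδ⟩ := exists_code.mp (Partrec.nat_iff.mp hδ)
  obtain ⟨c, hc⟩ := exists_code.mp (Partrec.nat_iff.mp (master_partrec cδ))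
  set p : ℕ → Code := fun m => (c.curry m).curry (Encodable.encode (c.curry m)) with hp
  set f : ℕ → ℕ := fun m => Encodable.encode (p m) with hf
  have hcomp : Computable f := by
    have h1 : Primrec fun m : ℕ => c.curry m := primrec₂_curry.comp (Primrec.const c) Primrec.id
    exact (Primrec.encode.comp
      (primrec₂_curry.comp h1 (Primrec.encode.comp h1))).to_comp
  -- the key evaluation identity
  have key : ∀ m y, phi (f m) y =
      (Nat.rfindOpt fun s =>
        evaln s (Denumerable.ofNat Code m.unpair.1) m.unpair.2 <|> evaln s cδ (f m)) >>=
        fun v => phi v y := by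
    intro m y
    have h1 : phi (f m) y = master cδ (Nat.pair m (Nat.pair (Encodable.encode (c.curry m)) y)) := by
      simp only [phi, hf, hp, Denumerable.ofNat_encode, eval_curry, hc]
    have harg : step cδ (Nat.pair m (Nat.pair (Encodable.encode (c.curry m)) y)) =
        fun s => evaln s (Denumerable.ofNat Code m.unpair.1) m.unpair.2 <|> evaln s cδ (f m) := by
      funext s
      simp only [step, Nat.unpair_pair, Denumerable.ofNat_encode, hf, hp]
    rw [h1]
    simp only [master, Nat.unpair_pair]
    rw [harg]
    rfl
  -- the FPF contradiction lemma
  have claimA : ∀ m v, (∀ y, phi (f m) y = phi v y) → v ∈ δ (f m) → False := by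
    intro m v hv hvδ
    have : Wdom (f m) = Wdom v := Set.ext fun x => by simp only [Wdom, Set.mem_setOf_eq, hv x]
    exact hfpf (f m) v hvδ this.symm
  refine ⟨f, hcomp, ?_, ?_⟩
  · intro e n a ha
    set m := Nat.pair e n with hm
    have ha' : a ∈ (Denumerable.ofNat Code e).eval n := ha
    obtain ⟨s, hs⟩ := evaln_complete.mp ha'
    have hdom : (Nat.rfindOpt fun s =>
        evaln s (Denumerable.ofNat Code m.unpair.1) m.unpair.2 <|> evaln s cδ (f m)).Dom := by
      refine Nat.rfindOpt_dom.mpr ⟨s, a, ?_⟩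
      simp only [hm, Nat.unpair_pair]
      rw [Option.mem_def] at hs ⊢
      rw [hs]; rfl
    set v := Part.get _ hdom with hv
    have hvmem : v ∈ (Nat.rfindOpt fun s =>
        evaln s (Denumerable.ofNat Code m.unpair.1) m.unpair.2 <|> evaln s cδ (f m)) :=
      Part.get_mem hdom
    have hphieq : ∀ y, phi (f m) y = phi v y := by
      intro y
      rw [key m y, Part.eq_some_iff.mpr hvmem]
      simp
    obtain ⟨s', hs'⟩ := Nat.rfindOpt_spec hvmem
    cases h' : evaln s' (Denumerable.ofNat Code m.unpair.1) m.unpair.2 with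
    | none =>
      rw [Option.mem_def, h', none_orElse] at hs'
      exact (claimA m v hphieq (by rw [← hcδ]; exact evaln_sound hs')).elim
    | some b =>
      rw [Option.mem_def, h', some_orElse, Option.some_inj] at hs'
      subst hs'
      have : v ∈ (Denumerable.ofNat Code e).eval n := by
        have := evaln_sound h'
        simpa [hm, Nat.unpair_pair] using this
      have hva : v = a := Part.mem_unique this ha'
      subst hva
      exact Set.ext fun x => by simp only [Wdom, Set.mem_setOf_eq, hphieq x]
  · intro e n hdiv hδdom
    set m := Nat.pair e n with hm
    obtain ⟨b, hb⟩ := Part.dom_iff_mem.mp hδdom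
    have hb' : b ∈ eval cδ (f m) := by rw [hcδ]; exact hb
    obtain ⟨s, hs⟩ := evaln_complete.mp hb'
    have hnone : ∀ s', evaln s' (Denumerable.ofNat Code m.unpair.1) m.unpair.2 = Option.none := by
      intro s'
      cases h' : evaln s' (Denumerable.ofNat Code m.unpair.1) m.unpair.2 with
      | none => rfl
      | some a =>
        exact absurd (Part.dom_iff_mem.mpr ⟨a, by
          have := evaln_sound h'
          simpa [hm, Nat.unpair_pair, phi] using this⟩) hdiv
    have hdom : (Nat.rfindOpt fun s =>
        evaln s (Denumerable.ofNat Code m.unpair.1) m.unpair.2 <|> evaln s cδ (f m)).Dom := by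
      refine Nat.rfindOpt_dom.mpr ⟨s, b, ?_⟩
      rw [hnone s, none_orElse]
      exact hs
    set v := Part.get _ hdom with hv
    have hvmem : v ∈ (Nat.rfindOpt fun s =>
        evaln s (Denumerable.ofNat Code m.unpair.1) m.unpair.2 <|> evaln s cδ (f m)) :=
      Part.get_mem hdom
    have hphieq : ∀ y, phi (f m) y = phi v y := by
      intro y
      rw [key m y, Part.eq_some_iff.mpr hvmem]
      simp
    obtain ⟨s', hs'⟩ := Nat.rfindOpt_spec hvmem
    simp only [Option.mem_def, hnone s', none_orElse] at hs'
    exact claimA m v hphieq (by rw [← hcδ]; exact evaln_sound hs')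
end
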